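/- Let Y₁ and Y₂ be subsets of the real line ℝ endowed with the usual metric |x−y|. If Y₁ and Y₂ are isometric as metric subspaces of ℝ, then ℝ \ Y₁ and ℝ \ Y₂ are also isometric as metric subspaces of ℝ. -/

import Mathlib

lemma compl_iso_of_global (Y₁ Y₂ : Set ℝ) (e : ℝ ≃ᵢ ℝ) (h : e '' Y₁ = Y₂) :
    Nonempty (↥(Y₁ᶜ) ≃ᵢ ↥(Y₂ᶜ)) := by
  have h2 : e '' Y₁ᶜ = Y₂ᶜ := by
    rw [← h, Set.image_compl_eq e.bijective]
  exact ⟨{ toEquiv := (e.toEquiv.image Y₁ᶜ).trans (Equiv.setCongr h2),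
           isometry_toFun := fun x y => e.isometry x y }⟩

theorem isometric_compl_of_isometric (Y₁ Y₂ : Set ℝ)
    (h : Nonempty (↥Y₁ ≃ᵢ ↥Y₂)) :
    Nonempty (↥(Y₁ᶜ) ≃ᵢ ↥(Y₂ᶜ)) := by
  obtain ⟨f⟩ := h
  rcases Set.eq_empty_or_nonempty Y₁ with hY | ⟨a, ha⟩
  · have hY2 : Y₂ = ∅ := by
      rw [Set.eq_empty_iff_forall_notMem]
      intro y hy
      exact Set.eq_empty_iff_forall_notMem.1 hY _ (f.symm ⟨y, hy⟩).2
    subst hY; subst hY2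
    exact ⟨IsometryEquiv.refl _⟩
  · set fa : ℝ := (f ⟨a, ha⟩ : ℝ) with hfa
    have key : ∀ x y : Y₁, |(f x : ℝ) - f y| = |(x:ℝ) - y| := by
      intro x y
      have := f.dist_eq x y
      simpa [Subtype.dist_eq, Real.dist_eq] using this
    obtain ⟨ε, hε, hext⟩ : ∃ ε : ℝ, (ε = 1 ∨ ε = -1) ∧
        ∀ x : Y₁, (f x : ℝ) = ε * ((x:ℝ) - a) + fa := by
      by_cases hb : ∃ b : Y₁, (b:ℝ) ≠ a
      · obtain ⟨b, hb⟩ := hb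
        have hz0 : (b:ℝ) - a ≠ 0 := sub_ne_zero.2 hb
        have habs : |(f b : ℝ) - fa| = |(b:ℝ) - a| := key b ⟨a, ha⟩
        have hwz : ((f b : ℝ) - fa)^2 = ((b:ℝ) - a)^2 := by
          rw [← sq_abs, habs, sq_abs]
        have hw0 : (f b : ℝ) - fa ≠ 0 := by
          intro h0
          apply hz0
          have := hwz
          rw [h0] at this
          nlinarith [sq_nonneg ((b:ℝ) - a)]
        refine ⟨((f b : ℝ) - fa) / ((b:ℝ) - a), ?_, ?_⟩
        · rcases mul_self_eq_one_iff.1 (by field_simp; linarith [hwz] :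
            (((f b : ℝ) - fa) / ((b:ℝ) - a)) * (((f b : ℝ) - fa) / ((b:ℝ) - a)) = 1) with h1 | h1
          · exact Or.inl h1
          · exact Or.inr h1
        · intro x
          have h1 : |(f x : ℝ) - fa| = |(x:ℝ) - a| := key x ⟨a, ha⟩
          have h2 : |(f x : ℝ) - (f b : ℝ)| = |(x:ℝ) - (b:ℝ)| := key x b
          have hu : ((f x : ℝ) - fa)^2 = ((x:ℝ) - a)^2 := by
            rw [← sq_abs, h1, sq_abs]
          have huw : ((f x : ℝ) - (f b : ℝ))^2 = ((x:ℝ) - (b:ℝ))^2 := by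
            rw [← sq_abs, h2, sq_abs]
          have hmul : ((f x : ℝ) - fa) * ((f b : ℝ) - fa) = ((x:ℝ) - a) * ((b:ℝ) - a) := by
            linear_combination (hu + hwz - huw) / 2
          have hkey : ((f x : ℝ) - fa) * ((b:ℝ) - a) = ((x:ℝ) - a) * ((f b : ℝ) - fa) := by
            apply mul_right_cancel₀ hw0
            calc ((f x : ℝ) - fa) * ((b:ℝ) - a) * ((f b : ℝ) - fa)
                = (((f x : ℝ) - fa) * ((f b : ℝ) - fa)) * ((b:ℝ) - a) := by ring
              _ = (((x:ℝ) - a) * ((b:ℝ) - a)) * ((b:ℝ) - a) := by rw [hmul]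
              _ = ((x:ℝ) - a) * ((b:ℝ) - a)^2 := by ring
              _ = ((x:ℝ) - a) * ((f b : ℝ) - fa)^2 := by rw [hwz]
              _ = ((x:ℝ) - a) * ((f b : ℝ) - fa) * ((f b : ℝ) - fa) := by ring
          field_simp
          linear_combination hkey
      · push_neg at hb
        refine ⟨1, Or.inl rfl, fun x => ?_⟩
        have hx : x = (⟨a, ha⟩ : Y₁) := Subtype.ext (hb x)
        rw [hx]
        simp
        exact hfa.symm
    -- build the global isometry
    have ⟨e, he⟩ : ∃ e : ℝ ≃ᵢ ℝ, ∀ x : ℝ, e x = ε * (x - a) + fa := by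
      rcases hε with h1 | h1
      · refine ⟨IsometryEquiv.addLeft (fa - a), fun x => ?_⟩
        simp [IsometryEquiv.addLeft, h1]; show fa - a + x = x - a + fa; ring
      · refine ⟨(IsometryEquiv.neg ℝ).trans (IsometryEquiv.addLeft (fa + a)), fun x => ?_⟩
        simp [IsometryEquiv.addLeft, IsometryEquiv.neg, h1]; show fa + (a + -x) = a - x + fa; ring
    apply compl_iso_of_global Y₁ Y₂ e
    apply Set.eq_of_subset_of_subset
    · rintro y ⟨x, hx, rfl⟩
      rw [he x, ← hext ⟨x, hx⟩]
      exact (f ⟨x, hx⟩).2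
    · intro y hy
      refine ⟨(f.symm ⟨y, hy⟩ : ℝ), (f.symm ⟨y, hy⟩).2, ?_⟩
      rw [he, ← hext (f.symm ⟨y, hy⟩)]
      simp
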